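/- In the hyperbolic plane ℍ², for any three distinct points x, y, z, every complete geodesic g that meets the closed segment [x,y] and is not equal to the geodesic through x and y either meets the closed segment [x,z] (and differs from the geodesic through x,z) or meets the closed segment [z,y] (and differs from the geodesic through z,y). Equivalently, with T[x,y] denoting the set of geodesics transverse to [x,y] (meeting it, including endpoints, but excluding the geodesic through x and y), one has T[x,y] ⊆ T[x,z] ∪ T[z,y]. -/

import Mathlib

abbrev E2 := EuclideanSpace ℝ (Fin 2)

noncomputable def det2 (u v : E2) : ℝ := u 0 * v 1 - u 1 * v 0

lemma mem_span_iff_det (a b p : E2) (hab : a ≠ b) :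
    p ∈ affineSpan ℝ {a, b} ↔ det2 (b - a) (p - a) = 0 := by
  have h : p = (p - a) +ᵥ a := by simp
  rw [h, vadd_left_mem_affineSpan_pair]
  have hsimp : ((p - a) +ᵥ a) - a = p - a := by simp
  constructor
  · rintro ⟨r, hr⟩
    have h0 : (p - a) 0 = r * (b - a) 0 := by rw [← hr]; simp [vsub_eq_sub]
    have h1 : (p - a) 1 = r * (b - a) 1 := by rw [← hr]; simp [vsub_eq_sub]
    simp only [det2, hsimp, h0, h1]; ring
  · intro hd
    rw [hsimp] at hd
    have hu : b - a ≠ 0 := sub_ne_zero.mpr (Ne.symm hab)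
    have htwo : (b - a) 0 ≠ 0 ∨ (b - a) 1 ≠ 0 := by
      by_contra hc
      push_neg at hc
      apply hu
      ext i
      fin_cases i <;> simp only [Fin.mk_zero, Fin.mk_one] <;> simp [hc.1, hc.2]
    simp only [det2, sub_eq_zero] at hd
    rcases htwo with h0 | h1
    · refine ⟨(p - a) 0 / (b - a) 0, ?_⟩
      ext i
      fin_cases i
      · simp only [Fin.mk_zero]
        show _ * _ = _
        rw [div_mul_eq_mul_div, div_eq_iff h0]
        simp only [vsub_eq_sub]
        rfl
      · simp only [Fin.mk_one]
        show _ * _ = _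
        rw [div_mul_eq_mul_div, div_eq_iff h0]
        simp only [vsub_eq_sub] at hd ⊢
        rw [show (WithLp.equiv 2 (Fin 2 → ℝ)).toFun (b - a) 1 = (b - a).ofLp 1 from rfl]
        linear_combination -hd
    · refine ⟨(p - a) 1 / (b - a) 1, ?_⟩
      ext i
      fin_cases i
      · simp only [Fin.mk_zero]
        show _ * _ = _
        rw [div_mul_eq_mul_div, div_eq_iff h1]
        simp only [vsub_eq_sub] at hd ⊢
        rw [show (WithLp.equiv 2 (Fin 2 → ℝ)).toFun (b - a) 0 = (b - a).ofLp 0 from rfl]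
        linear_combination hd
      · simp only [Fin.mk_one]
        show _ * _ = _
        rw [div_mul_eq_mul_div, div_eq_iff h1]
        simp only [vsub_eq_sub]
        rfl

lemma det2_seg (u a p q : E2) (s t : ℝ) (hst : s + t = 1) :
    det2 u (s • p + t • q - a) = s * det2 u (p - a) + t * det2 u (q - a) := by
  simp only [det2, PiLp.sub_apply, PiLp.add_apply, PiLp.smul_apply, smul_eq_mul]
  linear_combination (u 0 * a 1 - u 1 * a 0) * hst

lemma exists_zero_comb {u v : ℝ} (h : u * v ≤ 0) :
    ∃ s t : ℝ, 0 ≤ s ∧ 0 ≤ t ∧ s + t = 1 ∧ s * u + t * v = 0 := by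
  rcases lt_trichotomy u 0 with h1 | h1 | h1
  · have hv : 0 ≤ v := by nlinarith
    have hd : (0:ℝ) < v - u := by linarith
    have ht0 : 0 ≤ (-u) / (v - u) := div_nonneg (by linarith) hd.le
    have ht1 : (-u) / (v - u) ≤ 1 := by rw [div_le_one hd]; linarith
    refine ⟨1 - (-u) / (v - u), (-u) / (v - u), by linarith, ht0, by ring, ?_⟩
    field_simp
    ring
  · exact ⟨1, 0, by norm_num, by norm_num, by norm_num, by simp [h1]⟩
  · have hv : v ≤ 0 := by nlinarith
    have hd : (0:ℝ) < u - v := by linarith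
    have ht0 : 0 ≤ u / (u - v) := div_nonneg h1.le hd.le
    have ht1 : u / (u - v) ≤ 1 := by rw [div_le_one hd]; linarith
    refine ⟨1 - u / (u - v), u / (u - v), by linarith, ht0, by ring, ?_⟩
    field_simp
    ring

lemma cross_lemma (a b : E2) (hab : a ≠ b) (p q : E2)
    (h : det2 (b - a) (p - a) * det2 (b - a) (q - a) ≤ 0) :
    ((affineSpan ℝ {a, b} : Set E2) ∩ segment ℝ p q).Nonempty := by
  obtain ⟨s, t, hs, ht, hst, hzero⟩ := exists_zero_comb h
  refine ⟨s • p + t • q, ?_, ⟨s, t, hs, ht, hst, rfl⟩⟩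
  rw [SetLike.mem_coe, mem_span_iff_det _ _ _ hab, det2_seg _ _ _ _ _ _ hst, hzero]

lemma span_pair_collapse (a b x y : E2) (hab : a ≠ b) (hxy : x ≠ y)
    (hx : x ∈ affineSpan ℝ {a, b}) (hy : y ∈ affineSpan ℝ {a, b}) :
    affineSpan ℝ {x, y} = affineSpan ℝ ({a, b} : Set E2) := by
  have h1 : affineSpan ℝ ({x, y} : Set E2) ≤ affineSpan ℝ ({a, b} : Set E2) :=
    affineSpan_pair_le_of_mem_of_mem hx hy
  refine le_antisymm h1 ?_
  rw [affineSpan_le, Set.insert_subset_iff, Set.singleton_subset_iff]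
  rw [mem_span_iff_det _ _ _ hab] at hx hy
  have hu : b - a ≠ 0 := sub_ne_zero.mpr (Ne.symm hab)
  have htwo : (b - a) 0 ≠ 0 ∨ (b - a) 1 ≠ 0 := by
    by_contra hc
    push_neg at hc
    apply hu
    ext i
    fin_cases i <;> simp only [Fin.mk_zero, Fin.mk_one] <;> simp [hc.1, hc.2]
  simp only [det2, sub_eq_zero, PiLp.sub_apply] at hx hy
  have htwo' : b 0 - a 0 ≠ 0 ∨ b 1 - a 1 ≠ 0 := by
    rcases htwo with h | h
    · exact Or.inl (by simpa using h)
    · exact Or.inr (by simpa using h)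
  clear htwo
  constructor
  · rw [SetLike.mem_coe, mem_span_iff_det _ _ _ hxy]
    simp only [det2, sub_eq_zero, PiLp.sub_apply]
    rcases htwo' with h0 | hone
    · refine mul_left_cancel₀ h0 ?_
      linear_combination (-(y 0 - a 0)) * hx + (x 0 - a 0) * hy
    · refine mul_left_cancel₀ hone ?_
      linear_combination (-(y 1 - a 1)) * hx + (x 1 - a 1) * hy
  · rw [SetLike.mem_coe, mem_span_iff_det _ _ _ hxy]
    simp only [det2, sub_eq_zero, PiLp.sub_apply]
    rcases htwo' with h0 | hone
    · refine mul_left_cancel₀ h0 ?_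
      linear_combination ((b 0 - a 0) - (y 0 - a 0)) * hx + ((x 0 - a 0) - (b 0 - a 0)) * hy
    · refine mul_left_cancel₀ hone ?_
      linear_combination ((b 1 - a 1) - (y 1 - a 1)) * hx + ((x 1 - a 1) - (b 1 - a 1)) * hy

/-- In the Klein model of the hyperbolic plane (the open unit disk of the
Euclidean plane, where hyperbolic geodesics are chords, i.e. intersections of affine
lines with the open disk, and hyperbolic segments are Euclidean segments), for any
three pairwise distinct points `x, y, z` in the disk, every geodesic line `L` (an
affine line meeting the open disk) that meets the closed segment `[x,y]` and differs
from the line through `x` and `y` either meets `[x,z]` and differs from the line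
through `x,z`, or meets `[z,y]` and differs from the line through `z,y`.
Equivalently, `T[x,y] ⊆ T[x,z] ∪ T[z,y]`. -/
theorem stmt1 (x y z : EuclideanSpace ℝ (Fin 2))
    (hx : ‖x‖ < 1) (hy : ‖y‖ < 1) (hz : ‖z‖ < 1)
    (hxy : x ≠ y) (hxz : x ≠ z) (hzy : z ≠ y)
    (L : AffineSubspace ℝ (EuclideanSpace ℝ (Fin 2)))
    (hL : ∃ a b : EuclideanSpace ℝ (Fin 2), a ≠ b ∧ L = affineSpan ℝ {a, b})
    (hLdisk : ∃ p ∈ (L : Set (EuclideanSpace ℝ (Fin 2))), ‖p‖ < 1)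
    (hmeets : ((L : Set (EuclideanSpace ℝ (Fin 2))) ∩ segment ℝ x y).Nonempty)
    (hne : L ≠ affineSpan ℝ {x, y}) :
    (((L : Set (EuclideanSpace ℝ (Fin 2))) ∩ segment ℝ x z).Nonempty
        ∧ L ≠ affineSpan ℝ {x, z}) ∨
    (((L : Set (EuclideanSpace ℝ (Fin 2))) ∩ segment ℝ z y).Nonempty
        ∧ L ≠ affineSpan ℝ {z, y}) := by
  obtain ⟨a, b, hab, rfl⟩ := hL
  set f : E2 → ℝ := fun p => det2 (b - a) (p - a) with hf
  obtain ⟨p, hpL, hpseg⟩ := hmeets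
  have hpL' : p ∈ affineSpan ℝ ({a, b} : Set E2) := hpL
  have hfp : f p = 0 := (mem_span_iff_det a b p hab).mp hpL'
  obtain ⟨s, t, hs, ht, hst, hp⟩ := hpseg
  have hsum : s * f x + t * f y = 0 := by
    rw [← hfp, hf]
    simp only
    rw [← hp]
    exact (det2_seg (b - a) a x y s t hst).symm
  have hsign : f x * f y ≤ 0 := by
    by_contra hpos
    push_neg at hpos
    have h1 : s * (f x) ^ 2 + t * (f x * f y) = 0 := by linear_combination (f x) * hsum
    have ht0 : t = 0 := by nlinarith [sq_nonneg (f x)]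
    have hs1 : s = 1 := by linarith
    have hfx : f x = 0 := by
      rw [ht0, hs1] at hsum; linarith
    rw [hfx] at hpos
    simp at hpos
  have hcases : f x * f z ≤ 0 ∨ f z * f y ≤ 0 := by
    by_contra hc
    push_neg at hc
    nlinarith [mul_pos hc.1 hc.2, hsign, sq_nonneg (f z)]
  rcases hcases with hc | hc
  · have hmeet : ((affineSpan ℝ {a, b} : Set E2) ∩ segment ℝ x z).Nonempty :=
      cross_lemma a b hab x z hc
    by_cases hEq : affineSpan ℝ ({a, b} : Set E2) = affineSpan ℝ {x, z}
    · right
      have hzL : z ∈ affineSpan ℝ ({a, b} : Set E2) := by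
        rw [hEq]; exact right_mem_affineSpan_pair ℝ x z
      have hxL : x ∈ affineSpan ℝ ({a, b} : Set E2) := by
        rw [hEq]; exact left_mem_affineSpan_pair ℝ x z
      refine ⟨⟨z, hzL, left_mem_segment ℝ z y⟩, ?_⟩
      intro hEq2
      have hyL : y ∈ affineSpan ℝ ({a, b} : Set E2) := by
        rw [hEq2]; exact right_mem_affineSpan_pair ℝ z y
      exact hne (span_pair_collapse a b x y hab hxy hxL hyL).symm
    · exact Or.inl ⟨hmeet, hEq⟩
  · have hmeet : ((affineSpan ℝ {a, b} : Set E2) ∩ segment ℝ z y).Nonempty :=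
      cross_lemma a b hab z y hc
    by_cases hEq : affineSpan ℝ ({a, b} : Set E2) = affineSpan ℝ {z, y}
    · left
      have hzL : z ∈ affineSpan ℝ ({a, b} : Set E2) := by
        rw [hEq]; exact left_mem_affineSpan_pair ℝ z y
      have hyL : y ∈ affineSpan ℝ ({a, b} : Set E2) := by
        rw [hEq]; exact right_mem_affineSpan_pair ℝ z y
      refine ⟨⟨z, hzL, right_mem_segment ℝ x z⟩, ?_⟩
      intro hEq2
      have hxL : x ∈ affineSpan ℝ ({a, b} : Set E2) := by
        rw [hEq2]; exact left_mem_affineSpan_pair ℝ x z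
      exact hne (span_pair_collapse a b x y hab hxy hxL hyL).symm
    · exact Or.inr ⟨hmeet, hEq⟩
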